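/- Subdividing every edge of a graph G yields a graph S(G) such that G has k pairwise vertex-disjoint paths connecting terminal pairs (s_i, t_i) if and only if S(G) has k mutually induced paths connecting the corresponding terminal pairs (with terminals kept at original vertices). -/

import Mathlib

open SimpleGraph

variable {V : Type*}

/-- A walk is an induced path if it is a path and the only adjacencies of `G`
among its vertices are the edges of the walk itself. -/
def IsInducedPath {G : SimpleGraph V} {a b : V} (p : G.Walk a b) : Prop :=
  p.IsPath ∧ ∀ x y, x ∈ p.support → y ∈ p.support → G.Adj x y → p.toSubgraph.Adj x y

/-- The full subdivision `S(G)` of `G`: every edge `uv` is replaced by a path through a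
new vertex corresponding to that edge. -/
def fullSubdiv (G : SimpleGraph V) : SimpleGraph (V ⊕ G.edgeSet) where
  Adj x y :=
    match x, y with
    | Sum.inl v, Sum.inr e => v ∈ (e : Sym2 V)
    | Sum.inr e, Sum.inl v => v ∈ (e : Sym2 V)
    | _, _ => False
  symm := by constructor; rintro (v | e) (w | f) h <;> first | exact h | exact h.elim
  loopless := by constructor; rintro (v | e) h <;> exact h.elim

lemma fullSubdiv_adj {G : SimpleGraph V} {x y : V ⊕ G.edgeSet} (h : (fullSubdiv G).Adj x y) :
    (∃ v e, x = Sum.inl v ∧ y = Sum.inr e ∧ v ∈ (e : Sym2 V)) ∨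
    (∃ v e, x = Sum.inr e ∧ y = Sum.inl v ∧ v ∈ (e : Sym2 V)) := by
  rcases x with v | e <;> rcases y with w | f
  · exact h.elim
  · exact Or.inl ⟨v, f, rfl, rfl, h⟩
  · exact Or.inr ⟨w, e, rfl, rfl, h⟩
  · exact h.elim

lemma mem_support_of_mem_edges {G : SimpleGraph V} {u v x : V} {p : G.Walk u v}
    {e : Sym2 V} (hx : x ∈ e) (he : e ∈ p.edges) : x ∈ p.support := by
  induction e using Sym2.ind with
  | _ a b =>
    rcases Sym2.mem_iff.mp hx with rfl | rfl
    · exact p.fst_mem_support_of_mem_edges he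
    · exact p.snd_mem_support_of_mem_edges he

/-- Lift a walk of `G` to a walk of the full subdivision. -/
def liftWalk (G : SimpleGraph V) : ∀ {u v : V}, G.Walk u v →
    (fullSubdiv G).Walk (Sum.inl u) (Sum.inl v)
  | _, _, Walk.nil => Walk.nil
  | u, v, Walk.cons h p =>
      Walk.cons (show (fullSubdiv G).Adj (Sum.inl u) (Sum.inr ⟨s(u, _), h⟩) from
          Sym2.mem_mk_left _ _)
        (Walk.cons (show (fullSubdiv G).Adj (Sum.inr ⟨s(u, _), h⟩) (Sum.inl _) from
          Sym2.mem_mk_right _ _) (liftWalk G p))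

lemma liftWalk_support_inl {G : SimpleGraph V} {u v x : V} (p : G.Walk u v) :
    Sum.inl x ∈ (liftWalk G p).support ↔ x ∈ p.support := by
  induction p with
  | nil => simp [liftWalk]
  | cons h p ih => simp [liftWalk, ih]

lemma liftWalk_support_inr {G : SimpleGraph V} {u v : V} {e : G.edgeSet} (p : G.Walk u v) :
    Sum.inr e ∈ (liftWalk G p).support ↔ (e : Sym2 V) ∈ p.edges := by
  induction p with
  | nil => simp [liftWalk]
  | cons h p ih =>
    simp only [liftWalk, Walk.support_cons, List.mem_cons, Walk.edges_cons, ih]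
    constructor
    · rintro (h1 | h1 | h1)
      · exact absurd h1 (by simp)
      · rw [Sum.inr.injEq] at h1; exact Or.inl (by rw [h1])
      · exact Or.inr h1
    · rintro (h1 | h1)
      · exact Or.inr (Or.inl (by rw [Sum.inr.injEq]; exact Subtype.ext h1))
      · exact Or.inr (Or.inr h1)

lemma liftWalk_isPath {G : SimpleGraph V} {u v : V} {p : G.Walk u v} (hp : p.IsPath) :
    (liftWalk G p).IsPath := by
  induction p with
  | nil => exact Walk.IsPath.nil
  | cons h p ih =>
    rw [Walk.cons_isPath_iff] at hp
    refine (Walk.cons_isPath_iff _ _).mpr ⟨(Walk.cons_isPath_iff _ _).mpr ⟨ih hp.1, ?_⟩, ?_⟩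
    · rw [liftWalk_support_inr]
      intro hmem
      exact hp.2 (p.fst_mem_support_of_mem_edges hmem)
    · simp only [Walk.support_cons, List.mem_cons]
      rintro (h1 | h1)
      · exact absurd h1 (by simp)
      · rw [liftWalk_support_inl] at h1
        exact hp.2 h1

lemma liftWalk_edges_mem {G : SimpleGraph V} {u v x : V} {e : G.edgeSet} (p : G.Walk u v)
    (hx : x ∈ (e : Sym2 V)) (he : (e : Sym2 V) ∈ p.edges) :
    s(Sum.inl x, (Sum.inr e : V ⊕ G.edgeSet)) ∈ (liftWalk G p).edges := by
  induction p with
  | nil => simp at he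
  | cons h p ih =>
    rw [Walk.edges_cons, List.mem_cons] at he
    simp only [liftWalk, Walk.edges_cons, List.mem_cons]
    rcases he with he | he
    · have he' : e = ⟨s(_, _), h⟩ := Subtype.ext he
      subst he'
      rcases Sym2.mem_iff.mp hx with rfl | rfl
      · exact Or.inl rfl
      · exact Or.inr (Or.inl (by rw [Sym2.eq_swap]))
    · exact Or.inr (Or.inr (ih he))

lemma liftWalk_isInduced {G : SimpleGraph V} {u v : V} {p : G.Walk u v} (hp : p.IsPath) :
    IsInducedPath (liftWalk G p) := by
  refine ⟨liftWalk_isPath hp, ?_⟩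
  intro x y hx hy hadj
  rw [← Subgraph.mem_edgeSet, Walk.mem_edges_toSubgraph]
  rcases fullSubdiv_adj hadj with ⟨w, e, rfl, rfl, hwe⟩ | ⟨w, e, rfl, rfl, hwe⟩
  · exact liftWalk_edges_mem p hwe ((liftWalk_support_inr p).mp hy)
  · rw [Sym2.eq_swap]
    exact liftWalk_edges_mem p hwe ((liftWalk_support_inr p).mp hx)

lemma projWalk_exists {G : SimpleGraph V} : ∀ (n : ℕ) {a b : V}
    (q : (fullSubdiv G).Walk (Sum.inl a) (Sum.inl b)), q.length = n → q.IsPath →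
    ∃ p : G.Walk a b, p.IsPath ∧ ∀ x, x ∈ p.support → Sum.inl x ∈ q.support := by
  intro n
  induction n using Nat.strong_induction_on with
  | _ n ih =>
    intro a b q hlen hq
    cases q with
    | nil => exact ⟨Walk.nil, Walk.IsPath.nil, by simp⟩
    | @cons _ x _ h q₁ =>
      rcases x with w | e
      · exact absurd h (by simp [fullSubdiv])
      cases q₁ with
      | @cons _ y _ h2 q₂ =>
        rcases y with c | f
        case inr => exact absurd h2 (by simp [fullSubdiv])
        -- h : a ∈ e, h2 : c ∈ e
        have ha : a ∈ (e : Sym2 V) := h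
        have hc : c ∈ (e : Sym2 V) := h2
        rw [Walk.cons_isPath_iff] at hq
        have hq2 := hq.1
        rw [Walk.cons_isPath_iff] at hq2
        have hac : a ≠ c := by
          rintro rfl
          exact hq.2 (by simp)
        have hedge : (e : Sym2 V) = s(a, c) := (Sym2.mem_and_mem_iff hac).mp ⟨ha, hc⟩
        have hadj : G.Adj a c := by
          rw [← mem_edgeSet, ← hedge]; exact e.2
        simp only [Walk.length_cons] at hlen
        obtain ⟨p', hp', hsub⟩ := ih q₂.length (by omega) q₂ rfl hq2.1
        refine ⟨Walk.cons hadj p', ?_, ?_⟩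
        · rw [Walk.cons_isPath_iff]
          refine ⟨hp', fun hmem => hq.2 ?_⟩
          simp only [Walk.support_cons, List.mem_cons]
          exact Or.inr (hsub a hmem)
        · intro x hx
          simp only [Walk.support_cons, List.mem_cons] at hx ⊢
          rcases hx with rfl | hx
          · exact Or.inl rfl
          · exact Or.inr (Or.inr (hsub x hx))

theorem stmt13 (G : SimpleGraph V) {k : ℕ} (s t : Fin k → V) :
    (∃ p : ∀ i : Fin k, G.Walk (s i) (t i),
      (∀ i, (p i).IsPath) ∧
      (∀ i j, i ≠ j → ∀ x, x ∈ (p i).support → x ∉ (p j).support)) ↔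
    (∃ q : ∀ i : Fin k, (fullSubdiv G).Walk (Sum.inl (s i)) (Sum.inl (t i)),
      (∀ i, IsInducedPath (q i)) ∧
      (∀ i j, i ≠ j → ∀ x, x ∈ (q i).support → x ∉ (q j).support) ∧
      (∀ i j, i ≠ j → ∀ x y, x ∈ (q i).support → y ∈ (q j).support →
        ¬ (fullSubdiv G).Adj x y)) := by
  constructor
  · rintro ⟨p, hpath, hdisj⟩
    refine ⟨fun i => liftWalk G (p i), fun i => liftWalk_isInduced (hpath i), ?_, ?_⟩
    · rintro i j hij (x | e) hx hy
      · rw [liftWalk_support_inl] at hx hy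
        exact hdisj i j hij x hx hy
      · rw [liftWalk_support_inr] at hx hy
        have hm := Sym2.out_fst_mem (e : Sym2 V)
        exact hdisj i j hij _ (mem_support_of_mem_edges hm hx)
          (mem_support_of_mem_edges hm hy)
    · intro i j hij x y hx hy hadj
      rcases fullSubdiv_adj hadj with ⟨w, e, rfl, rfl, hwe⟩ | ⟨w, e, rfl, rfl, hwe⟩
      · rw [liftWalk_support_inl] at hx
        rw [liftWalk_support_inr] at hy
        exact hdisj i j hij w hx (mem_support_of_mem_edges hwe hy)
      · rw [liftWalk_support_inr] at hx
        rw [liftWalk_support_inl] at hy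
        exact hdisj i j hij w (mem_support_of_mem_edges hwe hx) hy
  · rintro ⟨q, hind, hdisj, -⟩
    have H : ∀ i, ∃ p : G.Walk (s i) (t i), p.IsPath ∧
        ∀ x, x ∈ p.support → Sum.inl x ∈ (q i).support :=
      fun i => projWalk_exists (q i).length (q i) rfl (hind i).1
    choose p hpath hsub using H
    refine ⟨p, hpath, fun i j hij x hx hx' => ?_⟩
    exact hdisj i j hij (Sum.inl x) (hsub i x hx) (hsub j x hx')
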